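/- arXiv:1007.4614 — 5 statements merged into one kernel-verified Lean document; each statement's English description precedes it below -/
import Mathlib

section
/- Theorem 2.3, polynomial part: Let n ≥ 3 and let l, c be positive integers with l + c < n. Then the polynomial N_l^c(x,y) ∈ ℤ[x,y], viewed as a polynomial in y with coefficients in ℤ[x], is monic of degree (l + c)(n − l − c) in y. -/
open Polynomial in
/-- The Gaussian binomial polynomial
`g_{n,l}(x) = ∏_{i=0}^{l-1}(x^n − x^i) / ∏_{i=0}^{l-1}(x^l − x^i) ∈ ℤ[x]`
for `0 ≤ l ≤ n`, and `0` otherwise.  (The divisor is monic and the division is exact.) -/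
noncomputable def gP (n l : ℤ) : Polynomial ℤ :=
  if 0 ≤ l ∧ l ≤ n then
    (∏ i ∈ Finset.range l.toNat, ((X : Polynomial ℤ) ^ n.toNat - X ^ i)) /ₘ
      (∏ i ∈ Finset.range l.toNat, ((X : Polynomial ℤ) ^ l.toNat - X ^ i))
  else 0

/-- `g_{a,b}(x)`, viewed in `(ℤ[x])[y]` (a polynomial in the first variable `x`). -/
noncomputable def gX (a b : ℤ) : Polynomial (Polynomial ℤ) := Polynomial.C (gP a b)

/-- `g_{a,b}(y)`, viewed in `(ℤ[x])[y]` (a polynomial in the second variable `y`). -/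
noncomputable def gY (a b : ℤ) : Polynomial (Polynomial ℤ) := (gP a b).map Polynomial.C

section AuxG
open Polynomial
lemma monic_xpow_sub {m i : ℕ} (h : i < m) :
    (((X : Polynomial ℤ) ^ m - X ^ i)).Monic := by
  rw [sub_eq_add_neg]
  refine (monic_X_pow m).add_of_left ?_
  rw [degree_neg, degree_X_pow, degree_X_pow]
  exact_mod_cast h

lemma natDegree_xpow_sub {m i : ℕ} (h : i < m) :
    (((X : Polynomial ℤ) ^ m - X ^ i)).natDegree = m := by
  rw [natDegree_sub_eq_left_of_natDegree_lt] <;> simp [h]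

lemma gP_spec {a b : ℤ} (h0 : 0 ≤ b) (h1 : b ≤ a) :
    (gP a b).Monic ∧ ((gP a b).natDegree : ℤ) = b * (a - b) := by
  have h0a : 0 ≤ a := h0.trans h1
  rw [gP, if_pos ⟨h0, h1⟩]
  have hmn : ∀ i ∈ Finset.range b.toNat, (((X : Polynomial ℤ) ^ a.toNat - X ^ i)).Monic := by
    intro i hi
    exact monic_xpow_sub (lt_of_lt_of_le (Finset.mem_range.1 hi) (by omega))
  have hmd : ∀ i ∈ Finset.range b.toNat, (((X : Polynomial ℤ) ^ b.toNat - X ^ i)).Monic := by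
    intro i hi
    exact monic_xpow_sub (Finset.mem_range.1 hi)
  have hN : (∏ i ∈ Finset.range b.toNat, ((X : Polynomial ℤ) ^ a.toNat - X ^ i)).Monic :=
    monic_prod_of_monic _ _ hmn
  have hD : (∏ i ∈ Finset.range b.toNat, ((X : Polynomial ℤ) ^ b.toNat - X ^ i)).Monic :=
    monic_prod_of_monic _ _ hmd
  have hNdeg : (∏ i ∈ Finset.range b.toNat, ((X : Polynomial ℤ) ^ a.toNat - X ^ i)).natDegree
      = b.toNat * a.toNat := by
    rw [natDegree_prod_of_monic _ _ hmn]
    rw [Finset.sum_congr rfl (fun i hi => natDegree_xpow_sub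
      (lt_of_lt_of_le (Finset.mem_range.1 hi) (by omega)))]
    simp [mul_comm]
  have hDdeg : (∏ i ∈ Finset.range b.toNat, ((X : Polynomial ℤ) ^ b.toNat - X ^ i)).natDegree
      = b.toNat * b.toNat := by
    rw [natDegree_prod_of_monic _ _ hmd]
    rw [Finset.sum_congr rfl (fun i hi => natDegree_xpow_sub (Finset.mem_range.1 hi))]
    simp [mul_comm]
  have hle : (∏ i ∈ Finset.range b.toNat, ((X : Polynomial ℤ) ^ b.toNat - X ^ i)).degree
      ≤ (∏ i ∈ Finset.range b.toNat, ((X : Polynomial ℤ) ^ a.toNat - X ^ i)).degree := by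
    rw [degree_eq_natDegree hN.ne_zero, degree_eq_natDegree hD.ne_zero, hNdeg, hDdeg]
    exact_mod_cast Nat.mul_le_mul_left _ (by omega)
  constructor
  · unfold Polynomial.Monic
    rw [leadingCoeff_divByMonic_of_monic hD hle]
    exact hN
  · rw [natDegree_divByMonic _ hD, hNdeg, hDdeg]
    push_cast [Nat.sub_mul, Int.toNat_of_nonneg h0, Int.toNat_of_nonneg h0a,
      Nat.cast_sub (Nat.mul_le_mul_left _ (by omega : b.toNat ≤ a.toNat))]
    ring

lemma gP_eq_zero {a b : ℤ} (h : ¬(0 ≤ b ∧ b ≤ a)) : gP a b = 0 := by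
  rw [gP, if_neg h]



lemma gY_spec {a b : ℤ} (h0 : 0 ≤ b) (h1 : b ≤ a) :
    (gY a b).Monic ∧ ((gY a b).natDegree : ℤ) = b * (a - b) := by
  obtain ⟨hm, hd⟩ := gP_spec h0 h1
  refine ⟨hm.map _, ?_⟩
  rw [gY, hm.natDegree_map]
  exact hd

lemma gY_eq_zero {a b : ℤ} (h : ¬(0 ≤ b ∧ b ≤ a)) : gY a b = 0 := by
  rw [gY, gP_eq_zero h, Polynomial.map_zero]

lemma gP_eq_one {a b : ℤ} (h0 : 0 ≤ b) (h1 : b ≤ a) (h : b * (a - b) = 0) : gP a b = 1 := by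
  obtain ⟨hm, hd⟩ := gP_spec h0 h1
  rw [← hm.natDegree_eq_zero]
  omega

lemma gY_eq_one {a b : ℤ} (h0 : 0 ≤ b) (h1 : b ≤ a) (h : b * (a - b) = 0) : gY a b = 1 := by
  rw [gY, gP_eq_one h0 h1 h, Polynomial.map_one]

lemma gX_ne_zero {a b : ℤ} (h0 : 0 ≤ b) (h1 : b ≤ a) : gX a b ≠ 0 := by
  have := (gP_spec h0 h1).1.ne_zero
  simpa [gX] using this

lemma degree_gX_le (a b : ℤ) : (gX a b).degree ≤ 0 := degree_C_le
end AuxG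

/-- The polynomials `τ_{l,d}(x,y) ∈ ℤ[x,y]` (as elements of `(ℤ[x])[y]`), defined by
descending induction on `(l,d)` in the lexicographic order:  `τ_{l,d} = 0` if `l > n` or
`d > l`; `τ_{l,l} = g_{n,l}(x)` for `l ≤ n`; and for `d < l ≤ n`,
`τ_{l,d} = Σ_{u=l}^{2l−d} τ_{2l−d,u}·g_{u,l}(y) − Σ_{t=d+1}^{l} τ_{l,t}·g_{n−2l+t,t−d}(y)`. -/
noncomputable def tauP (n : ℕ) (l d : ℕ) : Polynomial (Polynomial ℤ) :=
  if _h : n < l ∨ l < d then 0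
  else if _hd : d = l then gX n l
  else
    (∑ u ∈ (Finset.Icc l (2 * l - d)).attach, tauP n (2 * l - d) u.1 * gY u.1 l) -
      ∑ t ∈ (Finset.Icc (d + 1) l).attach,
        tauP n l t.1 * gY ((n : ℤ) - 2 * l + t.1) ((t.1 : ℤ) - d)
  termination_by (n + 1 - l, l - d)
  decreasing_by
  · apply Prod.Lex.left
    omega
  · apply Prod.Lex.right'
    · omega
    · have := t.2
      rw [Finset.mem_Icc] at this
      omega

/-- `N_l^c(x,y) = Σ_{d=0}^{l} τ_{l,d}(x,y)·g_{n−2l+d}^{c}(y)` where `g_m^c = g_{m,m−c}`,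
as an element of `(ℤ[x])[y]`. -/
noncomputable def NP (n l c : ℕ) : Polynomial (Polynomial ℤ) :=
  ∑ d ∈ Finset.range (l + 1),
    tauP n l d * gY ((n : ℤ) - 2 * l + d) (((n : ℤ) - 2 * l + d) - c)

section AuxTau
open Polynomial
lemma degree_sum_lt'' {ι : Type*} (s : Finset ι) (f : ι → Polynomial (Polynomial ℤ)) {D : ℕ}
    (h : ∀ i ∈ s, (f i).degree < (D : WithBot ℕ)) :
    (∑ i ∈ s, f i).degree < (D : WithBot ℕ) :=
  lt_of_le_of_lt (degree_sum_le s f) ((Finset.sup_lt_iff (WithBot.bot_lt_coe D)).2 h)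

lemma degree_mul_monic {p q : Polynomial (Polynomial ℤ)} (hp : p.Monic) (hq : q.Monic) :
    (p * q).degree = ((p.natDegree + q.natDegree : ℕ) : WithBot ℕ) := by
  rw [degree_eq_natDegree (hp.mul hq).ne_zero, hp.natDegree_mul hq]

lemma tau_spec (k : ℕ) : ∀ n l d : ℕ, d ≤ l → l ≤ n → (n+1-l)*(n+2) + (l-d) ≤ k →
    (n + d < 2*l → tauP n l d = 0) ∧
    (d = l → tauP n l d = gX n l) ∧
    (d < l → 2*l ≤ n + d → (tauP n l d).Monic ∧
      ((tauP n l d).natDegree : ℤ) = ((l:ℤ)-d)*((n:ℤ)+d-l)) := by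
  induction k using Nat.strong_induction_on with
  | _ k IH =>
  intro n l d hdl hln hk
  refine ⟨?_, ?_, ?_⟩
  · -- vanishing case
    intro h
    have hd : d < l := by omega
    rw [tauP, dif_neg (by omega), dif_neg (by omega)]
    rw [Finset.sum_attach _ (fun u => tauP n (2*l-d) u * gY u l),
      Finset.sum_attach _ (fun t => tauP n l t * gY ((n:ℤ)-2*l+t) ((t:ℤ)-d))]
    rw [Finset.sum_eq_zero, Finset.sum_eq_zero, sub_zero]
    · intro t ht
      rw [Finset.mem_Icc] at ht
      by_cases h3 : n + t < 2*l
      · have hz := (IH ((n+1-l)*(n+2)+(l-t)) (by omega) n l t (by omega) hln le_rfl).1 h3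
        rw [hz, zero_mul]
      · have : gY ((n:ℤ)-2*l+t) ((t:ℤ)-d) = 0 := by
          apply gY_eq_zero
          intro ⟨c1, c2⟩
          omega
        rw [this, mul_zero]
    · intro u hu
      have : tauP n (2*l-d) u = 0 := by
        rw [tauP, dif_pos (by left; omega)]
      rw [this, zero_mul]
  · intro h
    rw [tauP, dif_neg (by omega), dif_pos h]
  · -- main case
    intro hd h2
    rw [tauP, dif_neg (by omega), dif_neg (by omega)]
    rw [Finset.sum_attach _ (fun u => tauP n (2*l-d) u * gY u l),
      Finset.sum_attach _ (fun t => tauP n l t * gY ((n:ℤ)-2*l+t) ((t:ℤ)-d))]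
    set m := 2*l - d with hm
    have hmz : (m:ℤ) = 2*(l:ℤ) - d := by omega
    have hlm : l < m := by omega
    have hmn : m ≤ n := by omega
    set E : ℕ := (l-d)*(n+d-l) with hE
    have hEz : (E:ℤ) = ((l:ℤ)-d)*((n:ℤ)+d-l) := by
      rw [hE, Nat.cast_mul, Nat.cast_sub hdl, Nat.cast_sub (by omega)]
      push_cast; ring
    have hEz2 : (E:ℤ) = ((m:ℤ)-l)*((n:ℤ)-m+l) := by rw [hEz, hmz]; ring
    set u₀ : ℕ := if 2*m ≤ n + l then l else 2*m - n with hu₀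
    have hu₀mem : u₀ ∈ Finset.Icc l m := by
      rw [hu₀]; split_ifs <;> (rw [Finset.mem_Icc]; omega)
    have hu₀1 : l ≤ u₀ ∧ 2*m ≤ n + u₀ ∧ (u₀ ≤ l ∨ u₀ ≤ 2*m - n) := by
      rw [hu₀]; split_ifs <;> omega
    set f : ℕ → Polynomial (Polynomial ℤ) := fun u => tauP n m u * gY u l with hf
    set g : ℕ → Polynomial (Polynomial ℤ) :=
      fun t => tauP n l t * gY ((n:ℤ)-2*l+t) ((t:ℤ)-d) with hg
    have hmeas : ∀ u : ℕ, (n+1-m)*(n+2) + (m-u) < k := by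
      intro u
      have h1 : (n+1-m)*(n+2) + (n+2) ≤ (n+1-l)*(n+2) := by
        have h2' : (n+1-m) + 1 ≤ n+1-l := by omega
        calc (n+1-m)*(n+2) + (n+2) = ((n+1-m)+1)*(n+2) := by ring
          _ ≤ (n+1-l)*(n+2) := Nat.mul_le_mul_right _ h2'
      omega
    have claimA : (f u₀).Monic ∧ (f u₀).degree = (E : WithBot ℕ) := by
      by_cases hc : 2*m ≤ n + l
      · have hu₀l : u₀ = l := by rw [hu₀, if_pos hc]
        obtain ⟨hτm, hτd⟩ := (IH _ (hmeas l) n m l (by omega) hmn le_rfl).2.2 hlm hc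
        have hgy : gY (l:ℤ) (l:ℤ) = 1 := gY_eq_one (by positivity) le_rfl (by ring)
        rw [hf, hu₀l]
        simp only [hgy, mul_one]
        refine ⟨hτm, ?_⟩
        rw [degree_eq_natDegree hτm.ne_zero]
        congr 1
        have : ((tauP n m l).natDegree : ℤ) = (E:ℤ) := by rw [hτd, hEz, hmz]; ring
        exact_mod_cast this
      · push_neg at hc
        have hu₀v : u₀ = 2*m - n := by rw [hu₀, if_neg (by omega)]
        have hu₀z : (u₀:ℤ) = 2*(m:ℤ) - n := by omega
        have hlu₀ : l ≤ u₀ := by omega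
        by_cases hum : u₀ = m
        · -- here m = n
          have hmn' : m = n := by omega
          have hτ : tauP n m u₀ = gX n m := by
            rw [hum]
            exact (IH _ (hmeas m) n m m le_rfl hmn le_rfl).2.1 rfl
          have hmzn : (m:ℤ) = (n:ℤ) := by omega
          have hgX1 : gX (n:ℤ) (m:ℤ) = 1 := by
            rw [gX, gP_eq_one (by positivity) (by omega) (by rw [hmzn]; ring)]
            exact Polynomial.C_1
          obtain ⟨hgm, hgd⟩ := gY_spec (a := (u₀:ℤ)) (b := (l:ℤ)) (by positivity)
            (by exact_mod_cast hlu₀)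
          rw [hf]
          simp only [hτ, hgX1, one_mul]
          refine ⟨hgm, ?_⟩
          rw [degree_eq_natDegree hgm.ne_zero]
          congr 1
          have : ((gY (u₀:ℤ) (l:ℤ)).natDegree : ℤ) = (E:ℤ) := by
            rw [hgd, hEz2, hu₀z, hmzn]; ring
          exact_mod_cast this
        · have hu₀m : u₀ < m := by omega
          obtain ⟨hτm, hτd⟩ := (IH _ (hmeas u₀) n m u₀ (by omega) hmn le_rfl).2.2 hu₀m
            (by omega)
          obtain ⟨hgm, hgd⟩ := gY_spec (a := (u₀:ℤ)) (b := (l:ℤ)) (by positivity)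
            (by exact_mod_cast hlu₀)
          refine ⟨hτm.mul hgm, ?_⟩
          rw [hf, degree_mul_monic hτm hgm]
          congr 1
          have : (((tauP n m u₀).natDegree + (gY (u₀:ℤ) (l:ℤ)).natDegree : ℕ) : ℤ)
              = (E:ℤ) := by
            push_cast
            rw [hτd, hgd, hEz2, hu₀z]; ring
          exact_mod_cast this
    have claimB : ∀ u ∈ Finset.Icc l m, u ≠ u₀ → (f u).degree < (E : WithBot ℕ) := by
      intro u hu hne
      rw [Finset.mem_Icc] at hu
      by_cases h3 : n + u < 2*m
      · have hz : tauP n m u = 0 := (IH _ (hmeas u) n m u hu.2 hmn le_rfl).1 h3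
        rw [hf]; simp only [hz, zero_mul, degree_zero]
        exact WithBot.bot_lt_coe E
      · push_neg at h3
        have hu₀u : u₀ < u := by
          rcases hu₀1.2.2 with h'|h' <;> omega
        obtain ⟨hgm, hgd⟩ := gY_spec (a := (u:ℤ)) (b := (l:ℤ)) (by positivity)
          (by exact_mod_cast hu.1)
        by_cases hum : u = m
        · have hmn' : m < n := by
            rcases hu₀1.2.2 with h'|h' <;> omega
          have hτ : tauP n m u = gX n m := by
            rw [hum]; exact (IH _ (hmeas m) n m m le_rfl hmn le_rfl).2.1 rfl
          rw [hf]; simp only [hτ]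
          rw [degree_mul, gX, degree_C (gP_spec (a := (n:ℤ)) (b := (m:ℤ))
            (by positivity) (by exact_mod_cast hmn)).1.ne_zero, zero_add,
            degree_eq_natDegree hgm.ne_zero]
          rw [Nat.cast_lt (α := WithBot ℕ)]
          have : ((gY (u:ℤ) (l:ℤ)).natDegree : ℤ) < (E:ℤ) := by
            rw [hgd, hEz2]
            have h1 : (u:ℤ) = m := by exact_mod_cast hum
            rw [h1]
            have k1 : (1:ℤ)*1 ≤ ((m:ℤ)-l)*((n:ℤ)-m) :=
              mul_le_mul (by omega) (by omega) (by norm_num) (by omega)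
            have kk : ((m:ℤ)-l)*((n:ℤ)-m+l) - (l:ℤ)*((m:ℤ)-l)
                = ((m:ℤ)-l)*((n:ℤ)-m) := by ring
            linarith
          exact_mod_cast this
        · have hum' : u < m := by omega
          obtain ⟨hτm, hτd⟩ := (IH _ (hmeas u) n m u hu.2 hmn le_rfl).2.2 hum' (by omega)
          rw [hf, degree_mul_monic hτm hgm, Nat.cast_lt (α := WithBot ℕ)]
          have : (((tauP n m u).natDegree + (gY (u:ℤ) (l:ℤ)).natDegree : ℕ) : ℤ)
              < (E:ℤ) := by
            push_cast
            rw [hτd, hgd, hEz2]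
            have hul : l < u := by omega
            have hu2m : 2*m < n + u := by
              rcases hu₀1.2.2 with h'|h' <;> omega
            have k1 : (1:ℤ)*1 ≤ ((u:ℤ)-l)*((n:ℤ)+u-2*m) :=
              mul_le_mul (by omega) (by omega) (by norm_num) (by omega)
            have kk : ((m:ℤ)-l)*((n:ℤ)-m+l)
                - (((m:ℤ)-u)*((n:ℤ)+u-m) + (l:ℤ)*((u:ℤ)-l))
                = ((u:ℤ)-l)*((n:ℤ)+u-2*m) := by ring
            linarith
          exact_mod_cast this
    have claimC : ∀ t ∈ Finset.Icc (d+1) l, (g t).degree < (E : WithBot ℕ) := by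
      intro t ht
      rw [Finset.mem_Icc] at ht
      by_cases h3 : n + t < 2*l
      · have hz : tauP n l t = 0 :=
          (IH ((n+1-l)*(n+2)+(l-t)) (by omega) n l t ht.2 hln le_rfl).1 h3
        rw [hg]; simp only [hz, zero_mul, degree_zero]
        exact WithBot.bot_lt_coe E
      · push_neg at h3
        by_cases hab : (n:ℤ)-2*l+t < (t:ℤ)-d
        · have : gY ((n:ℤ)-2*l+t) ((t:ℤ)-d) = 0 := gY_eq_zero (by intro ⟨c1,c2⟩; omega)
          rw [hg]; simp only [this, mul_zero, degree_zero]
          exact WithBot.bot_lt_coe E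
        · push_neg at hab
          obtain ⟨hgm, hgd⟩ := gY_spec (a := (n:ℤ)-2*l+t) (b := (t:ℤ)-d) (by omega) hab
          by_cases htl : t = l
          · subst htl
            have hτ : tauP n t t = gX n t :=
              (IH ((n+1-t)*(n+2)) (by omega) n t t le_rfl hln (by omega)).2.1 rfl
            rw [hg]; simp only [hτ]
            rw [degree_mul, gX, degree_C (gP_spec (a := (n:ℤ)) (b := (t:ℤ))
              (by positivity) (by exact_mod_cast hln)).1.ne_zero, zero_add,
              degree_eq_natDegree hgm.ne_zero]
            rw [Nat.cast_lt (α := WithBot ℕ)]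
            have : ((gY ((n:ℤ)-2*t+t) ((t:ℤ)-d)).natDegree : ℤ) < (E:ℤ) := by
              rw [hgd, hEz]
              have k1 : (1:ℤ)*1 ≤ ((t:ℤ)-d)*(t:ℤ) :=
                mul_le_mul (by omega) (by omega) (by norm_num) (by omega)
              have kk : ((t:ℤ)-d)*((n:ℤ)+d-t)
                  - ((t:ℤ)-d)*(((n:ℤ)-2*t+t) - ((t:ℤ)-d)) = ((t:ℤ)-d)*(t:ℤ) := by ring
              linarith
            exact_mod_cast this
          · have htl' : t < l := by omega
            obtain ⟨hτm, hτd⟩ :=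
              (IH ((n+1-l)*(n+2)+(l-t)) (by omega) n l t ht.2 hln le_rfl).2.2 htl' h3
            rw [hg, degree_mul_monic hτm hgm, Nat.cast_lt (α := WithBot ℕ)]
            have : (((tauP n l t).natDegree
                + (gY ((n:ℤ)-2*l+t) ((t:ℤ)-d)).natDegree : ℕ) : ℤ) < (E:ℤ) := by
              push_cast
              rw [hτd, hgd, hEz]
              have k1 : (1:ℤ)*1 ≤ ((t:ℤ)-d)*(t:ℤ) :=
                mul_le_mul (by omega) (by omega) (by norm_num) (by omega)
              have kk : ((l:ℤ)-d)*((n:ℤ)+d-l)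
                  - (((l:ℤ)-t)*((n:ℤ)+t-l)
                    + ((t:ℤ)-d)*(((n:ℤ)-2*l+t) - ((t:ℤ)-d))) = ((t:ℤ)-d)*(t:ℤ) := by ring
              linarith
            exact_mod_cast this
    have key : (∑ u ∈ Finset.Icc l m, f u) - (∑ t ∈ Finset.Icc (d+1) l, g t)
        = f u₀ + ((∑ u ∈ (Finset.Icc l m).erase u₀, f u)
            - ∑ t ∈ Finset.Icc (d+1) l, g t) := by
      rw [← Finset.add_sum_erase _ f hu₀mem]; ring
    rw [key]
    have hrest : ((∑ u ∈ (Finset.Icc l m).erase u₀, f u)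
        - ∑ t ∈ Finset.Icc (d+1) l, g t).degree < (E : WithBot ℕ) := by
      refine lt_of_le_of_lt (degree_sub_le _ _) (max_lt ?_ ?_)
      · exact degree_sum_lt'' _ _ (fun u hu =>
          claimB u (Finset.mem_of_mem_erase hu) (Finset.ne_of_mem_erase hu))
      · exact degree_sum_lt'' _ _ claimC
    have hlt : ((∑ u ∈ (Finset.Icc l m).erase u₀, f u)
        - ∑ t ∈ Finset.Icc (d+1) l, g t).degree < (f u₀).degree := by
      rw [claimA.2]; exact hrest
    constructor
    · exact claimA.1.add_of_left hlt
    · have hdeg := degree_add_eq_left_of_degree_lt hlt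
      rw [claimA.2] at hdeg
      rw [natDegree_eq_of_degree_eq_some hdeg, hEz]
end AuxTau

section Main
open Polynomial
/-- **Theorem 2.3, polynomial part.**  For `n ≥ 3` and positive `l, c` with `l + c < n`,
the polynomial `N_l^c(x,y)`, viewed as a polynomial in `y` over `ℤ[x]`, is monic of
degree `(l + c)(n − l − c)`. -/
theorem NP_monic_of_degree (n l c : ℕ) (hn : 3 ≤ n) (hl : 0 < l) (hc : 0 < c)
    (hlc : l + c < n) :
    (NP n l c).Monic ∧ (NP n l c).natDegree = (l + c) * (n - l - c) := by
  have hln : l ≤ n := by omega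
  have ts : ∀ d : ℕ, d ≤ l →
      (n + d < 2*l → tauP n l d = 0) ∧
      (d = l → tauP n l d = gX n l) ∧
      (d < l → 2*l ≤ n + d → (tauP n l d).Monic ∧
        ((tauP n l d).natDegree : ℤ) = ((l:ℤ)-d)*((n:ℤ)+d-l)) :=
    fun d hd => tau_spec ((n+1-l)*(n+2)+l) n l d hd hln (by omega)
  set d₀ : ℕ := 2*l + c - n with hd₀
  have hd₀l : d₀ < l := by omega
  set E : ℕ := (l+c)*(n-l-c) with hE
  have hEz : (E:ℤ) = ((l:ℤ)+c)*((n:ℤ)-l-c) := by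
    rw [hE, Nat.cast_mul, Nat.cast_sub (by omega), Nat.cast_sub (by omega)]
    push_cast; ring
  set F : ℕ → Polynomial (Polynomial ℤ) :=
    fun d => tauP n l d * gY ((n:ℤ)-2*l+d) (((n:ℤ)-2*l+d)-c) with hF
  have hmem : d₀ ∈ Finset.range (l+1) := by
    rw [Finset.mem_range]; omega
  have claimA : (F d₀).Monic ∧ (F d₀).degree = (E : WithBot ℕ) := by
    obtain ⟨hτm, hτd⟩ := (ts d₀ (by omega)).2.2 hd₀l (by omega)
    obtain ⟨hgm, hgd⟩ := gY_spec (a := (n:ℤ)-2*l+d₀) (b := ((n:ℤ)-2*l+d₀)-c)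
      (by omega) (by omega)
    refine ⟨hτm.mul hgm, ?_⟩
    rw [hF, degree_mul_monic hτm hgm]
    congr 1
    have : (((tauP n l d₀).natDegree
        + (gY ((n:ℤ)-2*l+d₀) (((n:ℤ)-2*l+d₀)-c)).natDegree : ℕ) : ℤ) = (E:ℤ) := by
      push_cast
      rw [hτd, hgd, hEz]
      have hcase : ((d₀:ℤ) = 0 ∧ 2*(l:ℤ)+c ≤ n) ∨ (d₀:ℤ) = 2*(l:ℤ)+c-n := by omega
      rcases hcase with ⟨h1, _⟩ | h1 <;> rw [h1] <;> ring
    exact_mod_cast this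
  have claimB : ∀ d ∈ Finset.range (l+1), d ≠ d₀ → (F d).degree < (E : WithBot ℕ) := by
    intro d hdm hne
    rw [Finset.mem_range] at hdm
    have hdl : d ≤ l := by omega
    by_cases h3 : n + d < 2*l
    · have hz : tauP n l d = 0 := (ts d hdl).1 h3
      rw [hF]; simp only [hz, zero_mul, degree_zero]
      exact WithBot.bot_lt_coe E
    · push_neg at h3
      by_cases hb : ((n:ℤ)-2*l+d)-c < 0
      · have : gY ((n:ℤ)-2*l+d) (((n:ℤ)-2*l+d)-c) = 0 :=
          gY_eq_zero (by intro ⟨c1,c2⟩; omega)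
        rw [hF]; simp only [this, mul_zero, degree_zero]
        exact WithBot.bot_lt_coe E
      · push_neg at hb
        obtain ⟨hgm, hgd⟩ := gY_spec (a := (n:ℤ)-2*l+d) (b := ((n:ℤ)-2*l+d)-c)
          hb (by omega)
        have hdd₀ : d₀ < d := by omega
        by_cases hdl' : d = l
        · subst hdl'
          have hτ : tauP n d d = gX n d := (ts d le_rfl).2.1 rfl
          rw [hF]; simp only [hτ]
          rw [degree_mul, gX, degree_C (gP_spec (a := (n:ℤ)) (b := (d:ℤ))
            (by positivity) (by exact_mod_cast hln)).1.ne_zero, zero_add,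
            degree_eq_natDegree hgm.ne_zero]
          rw [Nat.cast_lt (α := WithBot ℕ)]
          have : ((gY ((n:ℤ)-2*d+d) (((n:ℤ)-2*d+d)-c)).natDegree : ℤ) < (E:ℤ) := by
            rw [hgd, hEz]
            have k1 : (1:ℤ)*1 ≤ (d:ℤ)*((n:ℤ)-d-c) :=
              mul_le_mul (by omega) (by omega) (by norm_num) (by omega)
            have kk : ((d:ℤ)+c)*((n:ℤ)-d-c)
                - (((n:ℤ)-2*d+d)-c)*(((n:ℤ)-2*d+d)-(((n:ℤ)-2*d+d)-c))
                = (d:ℤ)*((n:ℤ)-d-c) := by ring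
            linarith
          exact_mod_cast this
        · have hdl'' : d < l := by omega
          obtain ⟨hτm, hτd⟩ := (ts d hdl).2.2 hdl'' h3
          rw [hF, degree_mul_monic hτm hgm, Nat.cast_lt (α := WithBot ℕ)]
          have : (((tauP n l d).natDegree
              + (gY ((n:ℤ)-2*l+d) (((n:ℤ)-2*l+d)-c)).natDegree : ℕ) : ℤ) < (E:ℤ) := by
            push_cast
            rw [hτd, hgd, hEz]
            have k1 : (1:ℤ)*1 ≤ (d:ℤ)*((n:ℤ)+d-2*l-c) :=
              mul_le_mul (by omega) (by omega) (by norm_num) (by omega)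
            have kk : ((l:ℤ)+c)*((n:ℤ)-l-c)
                - (((l:ℤ)-d)*((n:ℤ)+d-l)
                  + (((n:ℤ)-2*l+d)-c)*(((n:ℤ)-2*l+d)-(((n:ℤ)-2*l+d)-c)))
                = (d:ℤ)*((n:ℤ)+d-2*l-c) := by ring
            linarith
          exact_mod_cast this
  have key : NP n l c = F d₀ + ∑ d ∈ (Finset.range (l+1)).erase d₀, F d := by
    rw [NP, ← Finset.add_sum_erase _ F hmem]
  rw [key]
  have hrest : (∑ d ∈ (Finset.range (l+1)).erase d₀, F d).degree < (E : WithBot ℕ) :=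
    degree_sum_lt'' _ _ (fun d hd =>
      claimB d (Finset.mem_of_mem_erase hd) (Finset.ne_of_mem_erase hd))
  have hlt : (∑ d ∈ (Finset.range (l+1)).erase d₀, F d).degree < (F d₀).degree := by
    rw [claimA.2]; exact hrest
  constructor
  · exact claimA.1.add_of_left hlt
  · have hdeg := degree_add_eq_left_of_degree_lt hlt
    rw [claimA.2] at hdeg
    exact natDegree_eq_of_degree_eq_some hdeg

end Main
end

section
/- Proposition 2.5: Fix n ≥ 1 and let C(l,d) denote the condition max(0, 2l − n) ≤ d ≤ l ≤ n, and put δ(l,d) := (l − d)(n − l + d). For nonnegative integers l, d: (i) if C(l,d) is false then τ_{l,d}(x,y) = 0; (ii) if C(l,d) is true then τ_{l,d}(x,y) is a nonzero polynomial whose degree in the variable y equals δ(l,d); (iii) if C(l,d) is true and δ(l,d) > 0, then τ_{l,d}(x,y), viewed as a polynomial in y over ℤ[x], is monic. -/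
open Polynomial

lemma prod_monic_natDegree (A B : ℕ) (hBA : B ≤ A) :
    (∏ i ∈ Finset.range B, ((X : Polynomial ℤ) ^ A - X ^ i)).Monic ∧
    (∏ i ∈ Finset.range B, ((X : Polynomial ℤ) ^ A - X ^ i)).natDegree = B * A := by
  have hmon : ∀ i ∈ Finset.range B, ((X : Polynomial ℤ) ^ A - X ^ i).Monic := by
    intro i hi
    apply monic_X_pow_sub
    rw [degree_X_pow]
    exact_mod_cast Nat.lt_of_lt_of_le (Finset.mem_range.1 hi) hBA
  have hdeg : ∀ i ∈ Finset.range B, ((X : Polynomial ℤ) ^ A - X ^ i).natDegree = A := by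
    intro i hi
    rw [natDegree_sub_eq_left_of_natDegree_lt, natDegree_X_pow]
    rw [natDegree_X_pow, natDegree_X_pow]
    exact Nat.lt_of_lt_of_le (Finset.mem_range.1 hi) hBA
  refine ⟨monic_prod_of_monic _ _ hmon, ?_⟩
  rw [natDegree_prod _ _ fun i hi => (hmon i hi).ne_zero, Finset.sum_congr rfl hdeg,
    Finset.sum_const, Finset.card_range, smul_eq_mul]

lemma gP_monic_natDegree (a b : ℤ) (hb : 0 ≤ b) (hba : b ≤ a) :
    (gP a b).Monic ∧ (gP a b).natDegree = b.toNat * (a.toNat - b.toNat) := by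
  have hBA : b.toNat ≤ a.toNat := Int.toNat_le_toNat hba
  set A := a.toNat
  set B := b.toNat
  obtain ⟨hN, hNdeg⟩ := prod_monic_natDegree A B hBA
  obtain ⟨hD, hDdeg⟩ := prod_monic_natDegree B B le_rfl
  have hdegle : (∏ i ∈ Finset.range B, ((X : Polynomial ℤ) ^ B - X ^ i)).degree ≤
      (∏ i ∈ Finset.range B, ((X : Polynomial ℤ) ^ A - X ^ i)).degree := by
    rw [degree_eq_natDegree hN.ne_zero, degree_eq_natDegree hD.ne_zero, hNdeg, hDdeg]
    exact_mod_cast Nat.mul_le_mul_left B hBA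
  rw [gP, if_pos ⟨hb, hba⟩]
  constructor
  · unfold Polynomial.Monic
    rw [leadingCoeff_divByMonic_of_monic hD hdegle, hN.leadingCoeff]
  · rw [natDegree_divByMonic _ hD, hNdeg, hDdeg, Nat.mul_sub]

lemma gP_zero (a b : ℤ) (h : ¬(0 ≤ b ∧ b ≤ a)) : gP a b = 0 := if_neg h

lemma gY_monic (a b : ℤ) (hb : 0 ≤ b) (hba : b ≤ a) : (gY a b).Monic :=
  ((gP_monic_natDegree a b hb hba).1).map Polynomial.C

lemma gY_natDegree (a b : ℤ) (hb : 0 ≤ b) (hba : b ≤ a) :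
    (gY a b).natDegree = b.toNat * (a.toNat - b.toNat) := by
  obtain ⟨h1, h2⟩ := gP_monic_natDegree a b hb hba
  rw [gY, h1.natDegree_map, h2]

lemma gY_zero (a b : ℤ) (h : ¬(0 ≤ b ∧ b ≤ a)) : gY a b = 0 := by
  rw [gY, gP_zero a b h, Polynomial.map_zero]

lemma tauP_triv {n l d : ℕ} (h : n < l ∨ l < d) : tauP n l d = 0 := by
  rw [tauP]; exact dif_pos h

lemma tauP_diag {n l : ℕ} (h : l ≤ n) : tauP n l l = gX n l := by
  rw [tauP, dif_neg (by omega), dif_pos rfl]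

lemma tauP_rec {n l d : ℕ} (h1 : l ≤ n) (h2 : d < l) :
    tauP n l d =
      (∑ u ∈ Finset.Icc l (2 * l - d), tauP n (2 * l - d) u * gY u l) -
        ∑ t ∈ Finset.Icc (d + 1) l, tauP n l t * gY ((n : ℤ) - 2 * l + t) ((t : ℤ) - d) := by
  rw [tauP, dif_neg (by omega), dif_neg (by omega)]
  rw [Finset.sum_attach _ (fun u => tauP n (2 * l - d) u * gY u l),
    Finset.sum_attach _ (fun t => tauP n l t * gY ((n : ℤ) - 2 * l + t) ((t : ℤ) - d))]

def TauStmt (n l d : ℕ) : Prop :=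
  (¬ ((2 * l : ℤ) - n ≤ d ∧ d ≤ l ∧ l ≤ n) → tauP n l d = 0) ∧
    (((2 * l : ℤ) - n ≤ d ∧ d ≤ l ∧ l ≤ n) →
      tauP n l d ≠ 0 ∧ (tauP n l d).natDegree = (l - d) * (n - l + d)) ∧
    ((((2 * l : ℤ) - n ≤ d ∧ d ≤ l ∧ l ≤ n) ∧ 0 < (l - d) * (n - l + d)) →
      (tauP n l d).Monic)

lemma tauStmt_triv {n l d : ℕ} (h : n < l ∨ l < d) : TauStmt n l d := by
  refine ⟨fun _ => tauP_triv h, fun hc => ?_, fun hc => ?_⟩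
  · exfalso; rcases hc with ⟨_, h2, h3⟩; omega
  · exfalso; rcases hc.1 with ⟨_, h2, h3⟩; omega

lemma deg_mul_lt {p q : Polynomial (Polynomial ℤ)} {c : ℕ}
    (h : p.natDegree + q.natDegree < c) :
    (p * q).degree < ((c : ℕ) : WithBot ℕ) := by
  refine lt_of_le_of_lt (Polynomial.degree_mul_le p q) ?_
  refine lt_of_le_of_lt (add_le_add p.degree_le_natDegree q.degree_le_natDegree) ?_
  exact_mod_cast h

lemma tauStmt_all (n : ℕ) (hn : 1 ≤ n) :
    ∀ N l d : ℕ, (n + 1 - l) * (n + 2) + (l - d) ≤ N → TauStmt n l d := by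
  intro N
  induction N with
  | zero =>
    intro l d hμ
    have hl : n < l := by
      by_contra hl
      have h1 : 0 < (n + 1 - l) * (n + 2) := Nat.mul_pos (by omega) (by omega)
      omega
    exact tauStmt_triv (Or.inl hl)
  | succ N IH =>
    intro l d hμ
    by_cases htriv : n < l ∨ l < d
    · exact tauStmt_triv htriv
    push_neg at htriv
    obtain ⟨hln, hdl⟩ := htriv
    by_cases hdeq : d = l
    · -- diagonal case
      subst hdeq
      have hCd : (2 * d : ℤ) - n ≤ d ∧ d ≤ d ∧ d ≤ n := ⟨by omega, le_rfl, hln⟩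
      obtain ⟨hg1, hg2⟩ := gP_monic_natDegree (n : ℤ) (d : ℤ) (by omega) (by exact_mod_cast hln)
      refine ⟨fun hc => absurd hCd hc, fun _ => ?_, fun hc => ?_⟩
      · rw [tauP_diag hln]
        constructor
        · exact fun h0 => hg1.ne_zero (by simpa [gX, Polynomial.C_eq_zero] using h0)
        · simp [gX, Nat.sub_self]
      · exfalso
        have := hc.2
        simp [Nat.sub_self] at this
    · have hdlt : d < l := lt_of_le_of_ne hdl hdeq
      have hl1 : 1 ≤ l := by omega
      have IHl : ∀ t, d < t → t ≤ l → TauStmt n l t := by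
        intro t h1 h2
        apply IH l t
        generalize (n + 1 - l) * (n + 2) = Q at hμ ⊢
        omega
      by_cases hC : (2 * l : ℤ) - n ≤ d
      · -- main case
        have hm : 2 * l - d ≤ n := by omega
        have hlm : l < 2 * l - d := by omega
        have IHm : ∀ u, l ≤ u → u ≤ 2 * l - d → TauStmt n (2 * l - d) u := by
          intro u h1 h2
          apply IH (2 * l - d) u
          have h4 : (n + 1 - (2 * l - d)) * (n + 2) + (n + 2) ≤ (n + 1 - l) * (n + 2) := by
            have h3 : (n + 1 - (2 * l - d)) + 1 ≤ n + 1 - l := by omega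
            calc (n + 1 - (2 * l - d)) * (n + 2) + (n + 2)
                = ((n + 1 - (2 * l - d)) + 1) * (n + 2) := by ring
              _ ≤ (n + 1 - l) * (n + 2) := Nat.mul_le_mul_right _ h3
          generalize (n + 1 - (2 * l - d)) * (n + 2) = P at h4 ⊢
          generalize (n + 1 - l) * (n + 2) = Q at h4 hμ ⊢
          omega
        set u0 := max l (2 * (2 * l - d) - n) with hu0
        have hu0l : l ≤ u0 := le_max_left _ _
        have hu0m : u0 ≤ 2 * l - d := by omega
        have hu0z : (2 * (2 * l - d) : ℤ) - n ≤ u0 := by omega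
        have hCm : ((2 * ((2 * l - d : ℕ)) : ℤ) - n ≤ u0 ∧ u0 ≤ 2 * l - d ∧ 2 * l - d ≤ n) :=
          ⟨by omega, hu0m, hm⟩
        have hstm := IHm u0 hu0l hu0m
        obtain ⟨hTne, hTdeg⟩ := hstm.2.1 hCm
        have hTmon : (tauP n (2 * l - d) u0).Monic := by
          by_cases hcase : u0 < 2 * l - d
          · exact hstm.2.2 ⟨hCm, Nat.mul_pos (by omega) (by omega)⟩
          · have h1 : u0 = 2 * l - d := by omega
            have h2 : 2 * l - d = n := by omega
            rw [h1, h2, tauP_diag le_rfl]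
            obtain ⟨hg1, hg2⟩ := gP_monic_natDegree (n : ℤ) (n : ℤ) (by omega) le_rfl
            have hone : gP (n : ℤ) (n : ℤ) = 1 :=
              (Polynomial.Monic.natDegree_eq_zero hg1).mp (by rw [hg2]; simp)
            rw [gX, hone, map_one]
            exact Polynomial.monic_one
        have hgmon : (Polynomial.Monic (gY (u0 : ℤ) (l : ℤ))) :=
          gY_monic _ _ (by omega) (by exact_mod_cast hu0l)
        have hgdeg : (gY (u0 : ℤ) (l : ℤ)).natDegree = l * (u0 - l) := by
          rw [gY_natDegree _ _ (by omega) (by exact_mod_cast hu0l)]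
          simp [Int.toNat_natCast]
        have hT0mon : (tauP n (2 * l - d) u0 * gY (u0 : ℤ) (l : ℤ)).Monic := hTmon.mul hgmon
        have hT0deg : (tauP n (2 * l - d) u0 * gY (u0 : ℤ) (l : ℤ)).natDegree
            = (l - d) * (n - l + d) := by
          rw [hTmon.natDegree_mul hgmon, hTdeg, hgdeg]
          have hcase : u0 = l ∨ (u0 : ℤ) = 2 * (2 * (l : ℤ) - d) - n := by omega
          zify [hu0m, show d ≤ 2 * l by omega, hm, hu0l, hdl, hln]
          rcases hcase with h | h
          · rw [show ((u0 : ℤ)) = (l : ℤ) by exact_mod_cast h]; ring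
          · rw [h]; ring
        have hδpos : 0 < (l - d) * (n - l + d) := Nat.mul_pos (by omega) (by omega)
        have hsplit : tauP n l d = tauP n (2 * l - d) u0 * gY (u0 : ℤ) (l : ℤ) +
            ((∑ u ∈ Finset.Icc l (2 * l - d) \ {u0}, tauP n (2 * l - d) u * gY u l) -
              ∑ t ∈ Finset.Icc (d + 1) l,
                tauP n l t * gY ((n : ℤ) - 2 * l + t) ((t : ℤ) - d)) := by
          rw [tauP_rec hln hdlt,
            Finset.sum_eq_sum_sdiff_singleton_add
              (Finset.mem_Icc.mpr ⟨hu0l, hu0m⟩) (fun u => tauP n (2 * l - d) u * gY u l)]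
          ring
        have hRdeg : ((∑ u ∈ Finset.Icc l (2 * l - d) \ {u0}, tauP n (2 * l - d) u * gY u l) -
              ∑ t ∈ Finset.Icc (d + 1) l,
                tauP n l t * gY ((n : ℤ) - 2 * l + t) ((t : ℤ) - d)).degree
            < (((l - d) * (n - l + d) : ℕ) : WithBot ℕ) := by
          refine lt_of_le_of_lt (Polynomial.degree_sub_le _ _) (max_lt ?_ ?_)
          · refine lt_of_le_of_lt (Polynomial.degree_sum_le _ _) ?_
            rw [Finset.sup_lt_iff (WithBot.bot_lt_coe _)]
            intro u hu
            simp only [Finset.mem_sdiff, Finset.mem_Icc, Finset.mem_singleton] at hu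
            obtain ⟨⟨hul, hum⟩, hune⟩ := hu
            by_cases hz : (2 * (2 * l - d) : ℤ) - n ≤ u
            · obtain ⟨_, hdeg⟩ := (IHm u hul hum).2.1 ⟨by omega, hum, hm⟩
              refine deg_mul_lt ?_
              rw [hdeg, gY_natDegree _ _ (by omega) (by exact_mod_cast hul)]
              simp only [Int.toNat_natCast]
              have hul' : l < u := by omega
              zify [hum, show d ≤ 2 * l by omega, hm, le_of_lt hul', hdl, hln]
              have e : ((l : ℤ) - d) * ((n : ℤ) - l + d) -
                  ((2 * (l : ℤ) - d - u) * ((n : ℤ) - (2 * (l : ℤ) - d) + u) +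
                    (l : ℤ) * ((u : ℤ) - l)) =
                  ((u : ℤ) - l) * ((u : ℤ) + n - 2 * (2 * (l : ℤ) - d)) := by ring
              have hp1 : (0 : ℤ) < (u : ℤ) - l := by omega
              have hp2 : (0 : ℤ) < (u : ℤ) + n - 2 * (2 * (l : ℤ) - d) := by omega
              linarith [e, mul_pos hp1 hp2]
            · have h0 : tauP n (2 * l - d) u = 0 :=
                (IHm u hul hum).1 (fun hc => absurd hc.1 (by omega))
              rw [h0, zero_mul, Polynomial.degree_zero]
              exact WithBot.bot_lt_coe _
          · refine lt_of_le_of_lt (Polynomial.degree_sum_le _ _) ?_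
            rw [Finset.sup_lt_iff (WithBot.bot_lt_coe _)]
            intro t ht
            rw [Finset.mem_Icc] at ht
            obtain ⟨_, hdeg⟩ := (IHl t (by omega) ht.2).2.1 ⟨by omega, ht.2, hln⟩
            refine deg_mul_lt ?_
            rw [hdeg, gY_natDegree _ _ (by omega) (by omega)]
            have e1 : ((n : ℤ) - 2 * l + t).toNat = n + t - 2 * l := by omega
            have e2 : ((t : ℤ) - d).toNat = t - d := by omega
            rw [e1, e2]
            zify [ht.2, hln, show d ≤ t by omega, show t - d ≤ n + t - 2 * l by omega,
              show 2 * l ≤ n + t by omega, hdl]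
            have e : ((l : ℤ) - d) * ((n : ℤ) - l + d) -
                (((l : ℤ) - t) * ((n : ℤ) - l + t) +
                  ((t : ℤ) - d) * (((n : ℤ) + t - 2 * l) - ((t : ℤ) - d))) =
                ((t : ℤ) - d) * t := by ring
            linarith [e, mul_pos (show (0 : ℤ) < (t : ℤ) - d by omega)
              (show (0 : ℤ) < (t : ℤ) by omega)]
        have hT0degree : (tauP n (2 * l - d) u0 * gY (u0 : ℤ) (l : ℤ)).degree
            = (((l - d) * (n - l + d) : ℕ) : WithBot ℕ) := by
          rw [Polynomial.degree_eq_natDegree hT0mon.ne_zero, hT0deg]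
        have hmonτ : (tauP n l d).Monic := by
          rw [hsplit]
          exact hT0mon.add_of_left (by rw [hT0degree]; exact hRdeg)
        have hdegτ : (tauP n l d).degree = (((l - d) * (n - l + d) : ℕ) : WithBot ℕ) := by
          rw [hsplit,
            Polynomial.degree_add_eq_left_of_degree_lt (by rw [hT0degree]; exact hRdeg),
            hT0degree]
        exact ⟨fun hc => absurd ⟨hC, hdl, hln⟩ hc,
          fun _ => ⟨hmonτ.ne_zero, Polynomial.natDegree_eq_of_degree_eq_some hdegτ⟩,
          fun _ => hmonτ⟩
      · -- case A: 2l - d > n, tau = 0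
        have hzero : tauP n l d = 0 := by
          rw [tauP_rec hln hdlt]
          rw [Finset.sum_eq_zero, Finset.sum_eq_zero, sub_zero]
          · intro t ht
            rw [Finset.mem_Icc] at ht
            by_cases hzt : (t : ℤ) < 2 * l - n
            · have h0 : tauP n l t = 0 :=
                (IHl t (by omega) ht.2).1 (fun hc => absurd hc.1 (by omega))
              rw [h0, zero_mul]
            · rw [gY_zero _ _ (fun h => absurd h.2 (by omega)), mul_zero]
          · intro u hu
            rw [Finset.mem_Icc] at hu
            rw [tauP_triv (Or.inl (show n < 2 * l - d by omega)), zero_mul]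
        refine ⟨fun _ => hzero, fun hc => absurd hc.1 (by omega), fun hc => ?_⟩
        exfalso; exact absurd hc.1.1 (by omega)

/-- **Proposition 2.5.**  Let `C(l,d)` be the condition `max(0, 2l − n) ≤ d ≤ l ≤ n` and put
`δ(l,d) = (l − d)(n − l + d)`.  If `C(l,d)` fails then `τ_{l,d} = 0`; if `C(l,d)` holds then
`τ_{l,d}` is nonzero of degree `δ(l,d)` in `y`; and if moreover `δ(l,d) > 0` then `τ_{l,d}`
is monic as a polynomial in `y` over `ℤ[x]`. -/
theorem tau_degree_monic (n : ℕ) (hn : 1 ≤ n) (l d : ℕ) :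
    (¬ ((2 * l : ℤ) - n ≤ d ∧ d ≤ l ∧ l ≤ n) → tauP n l d = 0) ∧
    (((2 * l : ℤ) - n ≤ d ∧ d ≤ l ∧ l ≤ n) →
      tauP n l d ≠ 0 ∧ (tauP n l d).natDegree = (l - d) * (n - l + d)) ∧
    ((((2 * l : ℤ) - n ≤ d ∧ d ≤ l ∧ l ≤ n) ∧ 0 < (l - d) * (n - l + d)) →
      (tauP n l d).Monic) := by
  exact tauStmt_all n hn ((n + 1 - l) * (n + 2) + (l - d)) l d le_rfl
end

section
/- Duality of Frobenius-intersection counts (proof of Corollary 2.6): Let p be a prime, q = p^e with e ≥ 1, n ≥ 1, and ν a positive integer. For all nonnegative integers l ≤ n and d, the number of F_{q^ν}-subspaces L of F_{q^ν}^n with dim L = l and dim(L ∩ L^q) = d equals the number of F_{q^ν}-subspaces L′ of F_{q^ν}^n with dim L′ = n − l and dim(L′ ∩ L′^q) = n − 2l + d. Indeed, orthogonal complementation L ↦ L^⊥ with respect to the standard dot product on F_{q^ν}^n gives such a bijection, since (L^⊥)^q = (L^q)^⊥ and L^⊥ ∩ (L^⊥)^q = (L + L^q)^⊥. -/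
/-- The `p^e`-th power ring homomorphism (iterated Frobenius) on a field of characteristic `p`. -/
noncomputable def frobHom (F : Type*) [Field F] (p : ℕ) [Fact p.Prime] [CharP F p] (e : ℕ) :
    F →+* F where
  toFun x := x ^ p ^ e
  map_one' := one_pow _
  map_mul' x y := mul_pow x y _
  map_zero' := zero_pow (pow_ne_zero e (Fact.out : p.Prime).ne_zero)
  map_add' x y := add_pow_char_pow x y p e

instance (F : Type*) [Field F] [Finite F] (p : ℕ) [Fact p.Prime] [CharP F p] (e : ℕ) :
    RingHomSurjective (frobHom F p e) :=
  ⟨Finite.injective_iff_surjective.mp (frobHom F p e).injective⟩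

/-- The coordinatewise `p^e`-th power map on `Fin n → F`, as a semilinear map over `frobHom`. -/
noncomputable def frobLin (F : Type*) [Field F] (p : ℕ) [Fact p.Prime] [CharP F p] (e n : ℕ) :
    (Fin n → F) →ₛₗ[frobHom F p e] (Fin n → F) where
  toFun a := fun i => a i ^ p ^ e
  map_add' a b := funext fun i => add_pow_char_pow (a i) (b i) p e
  map_smul' c a := funext fun i => by
    simp [frobHom, mul_pow, Pi.smul_apply, smul_eq_mul]

/-- `L^q` for `q = p^e`: the image of the subspace `L ⊆ F^n` under the coordinatewise
`q`-th power (Frobenius) map; it is again an `F`-subspace. -/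
noncomputable def frobSub (F : Type*) [Field F] [Finite F] (p : ℕ) [Fact p.Prime] [CharP F p]
    (e n : ℕ) (L : Submodule F (Fin n → F)) : Submodule F (Fin n → F) :=
  L.map (frobLin F p e n)

open Module LinearMap

section Aux

variable (F : Type) [Field F] (n : ℕ)

/-- The standard dot-product bilinear form on `Fin n → F`. -/
noncomputable def dotB : LinearMap.BilinForm F (Fin n → F) :=
  LinearMap.mk₂ F (fun x y => ∑ i, x i * y i)
    (fun x x' y => by simp [add_mul, Finset.sum_add_distrib])
    (fun c x y => by simp [Finset.mul_sum, mul_assoc])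
    (fun x y y' => by simp [mul_add, Finset.sum_add_distrib])
    (fun c x y => by simp [Finset.mul_sum, mul_left_comm])

lemma dotB_apply (x y : Fin n → F) : dotB F n x y = ∑ i, x i * y i := rfl

lemma dotB_comm (x y : Fin n → F) : dotB F n x y = dotB F n y x := by
  rw [dotB_apply, dotB_apply]
  exact Finset.sum_congr rfl fun i _ => mul_comm _ _

lemma dotB_refl : (dotB F n).IsRefl := fun x y h => by rw [dotB_comm]; exact h

lemma dotB_nondeg : (dotB F n).Nondegenerate := by
  refine (dotB_refl F n).nondegenerate_iff_separatingLeft.mpr ?_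
  intro x h
  funext i
  have := h (Pi.single i 1)
  simpa [dotB_apply, Pi.single_apply, mul_ite, Finset.sum_ite_eq'] using this

lemma dotB_orthogonal_sup (W W' : Submodule F (Fin n → F)) :
    (dotB F n).orthogonal (W ⊔ W') = (dotB F n).orthogonal W ⊓ (dotB F n).orthogonal W' := by
  ext x
  simp only [Submodule.mem_inf, LinearMap.BilinForm.mem_orthogonal_iff]
  constructor
  · exact fun h => ⟨fun y hy => h y (Submodule.mem_sup_left hy),
      fun y hy => h y (Submodule.mem_sup_right hy)⟩
  · rintro ⟨h1, h2⟩ y hy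
    obtain ⟨a, ha, b, hb, rfl⟩ := Submodule.mem_sup.mp hy
    show dotB F n (a + b) x = 0
    rw [map_add, LinearMap.add_apply, h1 a ha, h2 b hb, add_zero]

lemma dotB_finrank_orthogonal (W : Submodule F (Fin n → F)) :
    finrank F ((dotB F n).orthogonal W) = n - finrank F W := by
  rw [LinearMap.BilinForm.finrank_orthogonal (dotB_nondeg F n) W,
    Module.finrank_fin_fun]

lemma dotB_orthogonal_orthogonal (W : Submodule F (Fin n → F)) :
    (dotB F n).orthogonal ((dotB F n).orthogonal W) = W :=
  LinearMap.BilinForm.orthogonal_orthogonal (dotB_nondeg F n) (dotB_refl F n) W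

end Aux

section Frob

variable (F : Type) [Field F] [Fintype F] (p : ℕ) [Fact p.Prime] [CharP F p] (e n : ℕ)

lemma frobLin_injective : Function.Injective (frobLin F p e n) := by
  intro a b h
  funext i
  have : a i ^ p ^ e = b i ^ p ^ e := congrFun h i
  exact (frobHom F p e).injective this

lemma frobLin_surjective : Function.Surjective (frobLin F p e n) := by
  intro x
  have hs : Function.Surjective (frobHom F p e) :=
    Finite.injective_iff_surjective.mp (frobHom F p e).injective
  refine ⟨fun i => Function.surjInv hs (x i), funext fun i => ?_⟩
  exact Function.surjInv_eq hs (x i)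

lemma dotB_frobLin (a b : Fin n → F) :
    dotB F n (frobLin F p e n a) (frobLin F p e n b) = frobHom F p e (dotB F n a b) := by
  rw [dotB_apply, dotB_apply, map_sum]
  exact Finset.sum_congr rfl fun i _ => by simp [frobLin, frobHom, mul_pow]; rfl

lemma frob_orthogonal (L : Submodule F (Fin n → F)) :
    (dotB F n).orthogonal (frobSub F p e n L) = frobSub F p e n ((dotB F n).orthogonal L) := by
  ext x
  obtain ⟨z, rfl⟩ := frobLin_surjective F p e n x
  constructor
  · intro h
    refine ⟨z, fun y hy => ?_, rfl⟩
    have h1 := h (frobLin F p e n y) ⟨y, hy, rfl⟩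
    have h2 : frobHom F p e (dotB F n y z) = 0 := by
      rw [← dotB_frobLin]; exact h1
    exact (map_eq_zero _).mp h2
  · rintro ⟨w, hw, hwz⟩ y ⟨u, hu, rfl⟩
    have hz : w = z := frobLin_injective F p e n hwz
    subst hz
    show dotB F n (frobLin F p e n u) (frobLin F p e n w) = 0
    rw [dotB_frobLin, hw u hu, map_zero]

lemma finrank_frobSub (L : Submodule F (Fin n → F)) :
    finrank F (frobSub F p e n L) = finrank F L := by
  haveI : Fintype ↥L := Fintype.ofFinite _
  haveI : Fintype ↥(frobSub F p e n L) := Fintype.ofFinite _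
  have hcard : Nat.card (frobSub F p e n L) = Nat.card L := by
    have h : ((frobSub F p e n L : Set (Fin n → F))) = frobLin F p e n '' (L : Set (Fin n → F)) :=
      Submodule.map_coe _ _
    calc Nat.card ↥(frobSub F p e n L)
        = Nat.card ↥(frobLin F p e n '' (L : Set (Fin n → F))) := by rw [← h]; rfl
      _ = Nat.card ↥(L : Set (Fin n → F)) :=
          Nat.card_image_of_injective (frobLin_injective F p e n) _
      _ = Nat.card ↥L := rfl
  have h1 : Fintype.card ↥(frobSub F p e n L) =
      Fintype.card F ^ finrank F (frobSub F p e n L) := card_eq_pow_finrank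
  have h2 : Fintype.card ↥L = Fintype.card F ^ finrank F L := card_eq_pow_finrank
  rw [Nat.card_eq_fintype_card, Nat.card_eq_fintype_card, h1, h2] at hcard
  exact Nat.pow_right_injective Fintype.one_lt_card hcard

/-- The key dimension computation: the Frobenius intersection of the orthogonal complement. -/
lemma orth_inf_frob (L : Submodule F (Fin n → F)) :
    (dotB F n).orthogonal L ⊓ frobSub F p e n ((dotB F n).orthogonal L) =
      (dotB F n).orthogonal (L ⊔ frobSub F p e n L) := by
  rw [dotB_orthogonal_sup, frob_orthogonal]

end Frob

/-- **Duality of Frobenius-intersection counts** (proof of Corollary 2.6).  For `q = p^e`,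
`l ≤ n` and any `d`, the number of `F_{q^ν}`-subspaces `L ⊆ F_{q^ν}^n` with `dim L = l`
and `dim (L ∩ L^q) = d` equals the number of subspaces `L'` with `dim L' = n − l` and
`dim (L' ∩ L'^q) = n − 2l + d`. -/
theorem frobenius_count_duality
    (p : ℕ) [Fact p.Prime] (e : ℕ) (he : 1 ≤ e) (n : ℕ) (hn : 1 ≤ n)
    (ν : ℕ) (hν : 0 < ν) (l d : ℕ) (hl : l ≤ n)
    (F : Type) [Field F] [Fintype F] [CharP F p] (hF : Fintype.card F = (p ^ e) ^ ν) :
    Nat.card {L : Submodule F (Fin n → F) //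
        Module.finrank F ↥L = l ∧ Module.finrank F ↥(L ⊓ frobSub F p e n L) = d} =
      Nat.card {L : Submodule F (Fin n → F) //
        Module.finrank F ↥L = n - l ∧
        (Module.finrank F ↥(L ⊓ frobSub F p e n L) : ℤ) = (n : ℤ) - 2 * l + d} := by
  -- general dimension facts for any subspace `L`
  have key : ∀ L : Submodule F (Fin n → F),
      finrank F ↥((dotB F n).orthogonal L) = n - finrank F ↥L ∧
      finrank F ↥((dotB F n).orthogonal L ⊓ frobSub F p e n ((dotB F n).orthogonal L)) +
          (finrank F ↥L + finrank F ↥L) =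
        n + finrank F ↥(L ⊓ frobSub F p e n L) := by
    intro L
    refine ⟨dotB_finrank_orthogonal F n L, ?_⟩
    have h1 : finrank F ↥(L ⊔ frobSub F p e n L) + finrank F ↥(L ⊓ frobSub F p e n L) =
        finrank F ↥L + finrank F ↥(frobSub F p e n L) :=
      Submodule.finrank_sup_add_finrank_inf_eq _ _
    rw [finrank_frobSub] at h1
    have h2 : finrank F ↥((dotB F n).orthogonal L ⊓ frobSub F p e n ((dotB F n).orthogonal L)) =
        n - finrank F ↥(L ⊔ frobSub F p e n L) := by
      rw [orth_inf_frob, dotB_finrank_orthogonal]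
    have h3 : finrank F ↥(L ⊔ frobSub F p e n L) ≤ n := by
      have := Submodule.finrank_le (L ⊔ frobSub F p e n L)
      rwa [Module.finrank_fin_fun] at this
    omega
  have hle : ∀ L : Submodule F (Fin n → F), finrank F ↥L ≤ n := fun L => by
    have := Submodule.finrank_le L
    rwa [Module.finrank_fin_fun] at this
  refine Nat.card_eq_of_bijective (fun x => ⟨(dotB F n).orthogonal x.1, ?_, ?_⟩) ⟨?_, ?_⟩
  · obtain ⟨L, hL, hd⟩ := x
    show Module.finrank F ↥((dotB F n).orthogonal L) = n - l
    rw [(key L).1, hL]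
  · obtain ⟨L, hL, hd⟩ := x
    show (Module.finrank F ↥((dotB F n).orthogonal L ⊓
        frobSub F p e n ((dotB F n).orthogonal L)) : ℤ) = (n : ℤ) - 2 * l + d
    have h := (key L).2
    rw [hL, hd] at h
    have hdl : finrank F ↥(L ⊓ frobSub F p e n L) ≤ finrank F ↥L :=
      Submodule.finrank_mono inf_le_left
    rw [hL, hd] at hdl
    omega
  · rintro ⟨L, hL⟩ ⟨M, hM⟩ h
    have : (dotB F n).orthogonal L = (dotB F n).orthogonal M := congrArg Subtype.val h
    have := congrArg ((dotB F n).orthogonal) this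
    rw [dotB_orthogonal_orthogonal, dotB_orthogonal_orthogonal] at this
    exact Subtype.ext this
  · rintro ⟨L, hL, hd⟩
    refine ⟨⟨(dotB F n).orthogonal L, ?_, ?_⟩, ?_⟩
    · rw [(key L).1, hL]
      omega
    · have h := (key L).2
      have hLn := hle L
      rw [hL] at h hLn
      have h1 := (key ((dotB F n).orthogonal L)).1
      rw [(key L).1, hL] at h1
      -- finrank of the double intersection equals d
      omega
    · exact Subtype.ext (dotB_orthogonal_orthogonal F n L)
end

section
/- Lemma 5.2: Let m ≥ 3 be an integer, let R be a commutative ring (e.g. R = ℤ[u,v,t]), and let u, v, t ∈ R. Define the m × m matrix A(m,u,v,t) = (a_{ij})_{1 ≤ i,j ≤ m} by a_{ij} = u if i + j = m; a_{ij} = 1 + uv if i + j = m + 1; a_{ij} = v if i + j = m + 2; a_{mm} = t; and a_{ij} = 0 otherwise. Then det A(m,u,v,t) = (−1)^{⌊m/2⌋}·( Σ_{i=0}^{m} (uv)^i + (−u)^{m−1}·t ). -/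
/-- The tridiagonal matrix with diagonal `1 + uv`, superdiagonal `u`, subdiagonal `v`. -/
private def triT {R : Type*} [CommRing R] (m : ℕ) (u v : R) : Matrix (Fin m) (Fin m) R :=
  Matrix.of fun i j => if j.1 = i.1 + 1 then u else if j.1 = i.1 then 1 + u * v
    else if i.1 = j.1 + 1 then v else 0

/-- The tridiagonal matrix with an extra `t` in the bottom-left corner. -/
private def matB {R : Type*} [CommRing R] (m : ℕ) (u v t : R) : Matrix (Fin m) (Fin m) R :=
  Matrix.of fun i j => if i.1 = m - 1 ∧ j.1 = 0 then t
    else if j.1 = i.1 + 1 then u else if j.1 = i.1 then 1 + u * v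
    else if i.1 = j.1 + 1 then v else 0

/-- The antidiagonal (column-reversal) permutation matrix. -/
private def matJ (R : Type*) [CommRing R] (m : ℕ) : Matrix (Fin m) (Fin m) R :=
  Matrix.of fun i j => if i.1 + j.1 + 1 = m then 1 else 0

private lemma triT_minor0 {R : Type*} [CommRing R] (n : ℕ) (u v : R) :
    (triT (n+1) u v).submatrix Fin.succ Fin.succ = triT n u v := by
  ext i j
  simp only [triT, Matrix.submatrix_apply, Matrix.of_apply, Fin.val_succ]
  split_ifs <;> first | rfl | omega

private lemma det_triT {R : Type*} [CommRing R] (u v : R) : ∀ m, (triT m u v).det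
    = ∑ i ∈ Finset.range (m+1), (u*v)^i := by
  intro m
  induction m using Nat.strong_induction_on with
  | _ m ih =>
    match m with
    | 0 => simp [triT]
    | 1 => simp [triT, Matrix.det_fin_one]; ring
    | (n+2) =>
      rw [Matrix.det_succ_row_zero, Fin.sum_univ_succ, Fin.sum_univ_succ]
      have h0 : triT (n+2) u v 0 0 = 1 + u * v := by simp [triT]
      have h1 : triT (n+2) u v 0 (Fin.succ 0) = u := by simp [triT]
      have hrest : ∀ j : Fin n, triT (n+2) u v 0 (Fin.succ (Fin.succ j)) = 0 := by
        intro j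
        simp only [triT, Matrix.of_apply, Fin.val_succ, Fin.val_zero]
        split_ifs <;> first | rfl | omega | exact absurd (by assumption) not_false
      rw [h0, h1, Finset.sum_eq_zero (fun j _ => by rw [hrest j]; ring)]
      -- minor at column 0
      rw [show ((0 : Fin (n+2)).succAbove) = Fin.succ from rfl, triT_minor0]
      -- minor at column 1
      have hminor1 : ((triT (n+2) u v).submatrix Fin.succ ((Fin.succ (0 : Fin (n+1))).succAbove)).det
          = v * (triT n u v).det := by
        rw [Matrix.det_succ_column_zero, Fin.sum_univ_succ]
        have e0 : (triT (n+2) u v).submatrix Fin.succ ((Fin.succ (0 : Fin (n+1))).succAbove) 0 0 = v := by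
          simp [triT, Fin.succ_succAbove_zero]
        have erest : ∀ i : Fin n, (triT (n+2) u v).submatrix Fin.succ
            ((Fin.succ (0 : Fin (n+1))).succAbove) (Fin.succ i) 0 = 0 := by
          intro i
          simp only [Matrix.submatrix_apply, Fin.succ_succAbove_zero, triT, Matrix.of_apply,
            Fin.val_succ, Fin.val_zero]
          split_ifs <;> first | rfl | omega | exact absurd (by assumption) not_false
        rw [e0, Finset.sum_eq_zero (fun i _ => by rw [erest i]; ring)]
        have hmm : ((triT (n+2) u v).submatrix Fin.succ
            ((Fin.succ (0 : Fin (n+1))).succAbove)).submatrix ((0 : Fin (n+1)).succAbove) Fin.succ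
            = triT n u v := by
          ext i j
          simp only [Matrix.submatrix_apply, Fin.succAbove_zero, Fin.succ_succAbove_succ,
            Fin.succAbove_zero]
          simp only [triT, Matrix.of_apply, Fin.val_succ]
          split_ifs <;> first | rfl | omega
        rw [hmm]
        simp
      rw [hminor1, ih (n+1) (by omega), ih n (by omega)]
      rw [Finset.sum_range_succ ((u*v) ^ ·) (n+2), Finset.sum_range_succ ((u*v) ^ ·) (n+1)]
      simp only [Fin.val_zero, pow_zero, Fin.val_succ, pow_one]
      ring

private lemma det_matB {R : Type*} [CommRing R] (n : ℕ) (u v t : R) :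
    (matB (n+3) u v t).det = (∑ i ∈ Finset.range (n+4), (u*v)^i) + (-u)^(n+2) * t := by
  have hB : matB (n+3) u v t = (triT (n+3) u v).updateRow (Fin.last (n+2))
      (Pi.single 0 t + triT (n+3) u v (Fin.last (n+2))) := by
    ext i j
    rw [Matrix.updateRow_apply]
    by_cases hi : i = Fin.last (n+2)
    · subst hi
      simp only [if_pos rfl, Pi.add_apply, Pi.single_apply, matB, triT, Matrix.of_apply,
        Fin.val_last, Fin.ext_iff, Fin.val_zero]
      split_ifs <;> first | omega | ring1 | exact absurd (by assumption) not_false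
    · rw [if_neg hi]
      have hi' : i.1 ≠ n + 2 := fun h => hi (Fin.ext h)
      simp only [matB, triT, Matrix.of_apply]
      split_ifs <;> first | omega | ring1 | exact absurd (by assumption) not_false
  have hC : ((triT (n+3) u v).updateRow (Fin.last (n+2)) (Pi.single 0 t)).det
      = (-1)^(n+2) * t * u^(n+2) := by
    rw [Matrix.det_succ_row _ (Fin.last (n+2))]
    rw [Finset.sum_eq_single (0 : Fin (n+3)) ?_ (by simp)]
    · have hL : ((triT (n+3) u v).updateRow (Fin.last (n+2)) (Pi.single 0 t)).submatrix
          (Fin.last (n+2)).succAbove ((0 : Fin (n+3)).succAbove)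
          = Matrix.of fun i j : Fin (n+2) => triT (n+3) u v i.castSucc j.succ := by
        ext i j
        simp only [Matrix.submatrix_apply, Fin.succAbove_last, Fin.succAbove_zero, Matrix.of_apply]
        rw [Matrix.updateRow_ne (Fin.castSucc_lt_last i).ne]
      rw [hL]
      have hLT : (Matrix.of fun i j : Fin (n+2) => triT (n+3) u v i.castSucc j.succ).det
          = u^(n+2) := by
        rw [Matrix.det_of_lowerTriangular]
        · have : ∀ i : Fin (n+2), triT (n+3) u v i.castSucc i.succ = u := by
            intro i; simp [triT]
          simp only [Matrix.of_apply, this]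
          simp
        · intro i j hij
          replace hij : i < j := hij
          simp only [Matrix.of_apply, triT, Fin.coe_castSucc, Fin.val_succ]
          rw [Fin.lt_iff_val_lt_val] at hij
          split_ifs <;> first | rfl | omega
      rw [hLT, Matrix.updateRow_self]
      simp [Pi.single_apply]
    · intro b _ hb
      rw [Matrix.updateRow_self]
      have : (Pi.single (0 : Fin (n+3)) t : Fin (n+3) → R) b = 0 := by
        rw [Pi.single_apply, if_neg hb]
      rw [this]
      ring
  rw [hB, Matrix.det_updateRow_add, Matrix.updateRow_eq_self, det_triT, hC, neg_pow]
  ring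

private lemma negOne_pow_half {R : Type*} [CommRing R] (n : ℕ) :
    ((-1 : R) ^ n) * (-1) ^ (n / 2) = (-1) ^ ((n + 1) / 2) := by
  rcases Nat.even_or_odd n with ⟨k, hk⟩ | ⟨k, hk⟩
  · subst hk
    have h1 : (k + k) / 2 = k := by omega
    have h2 : (k + k + 1) / 2 = k := by omega
    rw [h1, h2, ← two_mul, pow_mul]
    norm_num
  · subst hk
    have h1 : (2 * k + 1) / 2 = k := by omega
    have h2 : (2 * k + 1 + 1) / 2 = k + 1 := by omega
    rw [h1, h2, pow_succ, pow_add, pow_mul]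
    norm_num

private lemma det_matJ (R : Type*) [CommRing R] : ∀ m, (matJ R m).det = (-1 : R) ^ (m / 2) := by
  intro m
  induction m with
  | zero => simp [matJ]
  | succ n ih =>
    rw [Matrix.det_succ_row_zero]
    rw [Finset.sum_eq_single (Fin.last n) ?_ (by simp)]
    · have hm : (matJ R (n+1)).submatrix Fin.succ ((Fin.last n).succAbove) = matJ R n := by
        ext i j
        simp only [Matrix.submatrix_apply, Fin.succAbove_last, matJ, Matrix.of_apply,
          Fin.val_succ, Fin.coe_castSucc]
        split_ifs <;> first | rfl | omega
      have he : matJ R (n+1) 0 (Fin.last n) = 1 := by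
        simp [matJ]
      rw [hm, he, ih, Fin.val_last, mul_one, negOne_pow_half]
    · intro b _ hb
      have : matJ R (n+1) 0 b = 0 := by
        simp only [matJ, Matrix.of_apply, Fin.val_zero]
        apply if_neg
        have : b.1 ≠ n := fun h => hb (Fin.ext (by simpa using h))
        omega
      rw [this]
      ring

/-- The `m × m` matrix `A(m,u,v,t)` (indices read `1,…,m`): entry `(i,j)` is `u` if
`i + j = m`, `1 + uv` if `i + j = m + 1`, `v` if `i + j = m + 2`, the `(m,m)` entry is `t`,
and all other entries are `0`. -/
def matA {R : Type*} [CommRing R] (m : ℕ) (u v t : R) : Matrix (Fin m) (Fin m) R :=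
  Matrix.of fun i j =>
    if i.1 = m - 1 ∧ j.1 = m - 1 then t
    else if i.1 + j.1 + 2 = m then u
    else if i.1 + j.1 + 2 = m + 1 then 1 + u * v
    else if i.1 + j.1 + 2 = m + 2 then v
    else 0

private lemma matA_eq_mul {R : Type*} [CommRing R] (m : ℕ) (hm : 3 ≤ m) (u v t : R) :
    matA m u v t = matB m u v t * matJ R m := by
  ext i j
  have hj := j.2
  have hi := i.2
  rw [Matrix.mul_apply]
  have hc : ∀ k : Fin m, matJ R m k j = if k = ⟨m - 1 - j.1, by omega⟩ then 1 else 0 := by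
    intro k
    simp only [matJ, Matrix.of_apply, Fin.ext_iff]
    exact if_congr (by omega) rfl rfl
  simp_rw [hc, mul_ite, mul_one, mul_zero, Finset.sum_ite_eq' Finset.univ, Finset.mem_univ,
    if_pos]
  simp only [matA, matB, Matrix.of_apply]
  split_ifs <;> first | rfl | omega

/-- **Lemma 5.2.**  For `m ≥ 3` and `u, v, t` in a commutative ring,
`det A(m,u,v,t) = (−1)^{⌊m/2⌋}·((Σ_{i=0}^{m} (uv)^i) + (−u)^{m−1}·t)`. -/
theorem det_matA {R : Type*} [CommRing R] (m : ℕ) (hm : 3 ≤ m) (u v t : R) :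
    (matA m u v t).det =
      (-1) ^ (m / 2) *
        ((∑ i ∈ Finset.range (m + 1), (u * v) ^ i) + (-u) ^ (m - 1) * t) := by
  obtain ⟨n, rfl⟩ : ∃ n, m = n + 3 := ⟨m - 3, by omega⟩
  rw [matA_eq_mul _ hm, Matrix.det_mul, det_matB, det_matJ]
  have : n + 3 - 1 = n + 2 := by omega
  rw [this]
  ring
end

section
/- Description of Γ_2 (proof of Theorem 6.1): The F_2-linear code Γ_2 := {(x/4) mod 2 : x ∈ M_𝒞 ∩ 4·ℤ^𝒫} ⊆ F_2^𝒫 ≅ F_2^85 is equal to the even-weight code {c ∈ F_2^𝒫 : Σ_{P∈𝒫} c_P = 0}; in particular Γ_2 has dimension 84 over F_2. -/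
/-- The points of `P^3(F)`: one-dimensional `F`-subspaces of `F^4`. -/
abbrev ProjPts (F : Type) [Field F] := {P : Submodule F (Fin 4 → F) // Module.finrank F ↥P = 1}

instance (F : Type) [Field F] [Finite F] : Finite (Submodule F (Fin 4 → F)) :=
  Finite.of_injective (fun L => (L : Set (Fin 4 → F))) SetLike.coe_injective

noncomputable instance (F : Type) [Field F] [Finite F] : Fintype (ProjPts F) :=
  Fintype.ofFinite _

open scoped Classical in
/-- `v_Λ = Σ_{P ⊆ Λ} e_P ∈ ℤ^𝒫`. -/
noncomputable def vLam (F : Type) [Field F] (Λ : Submodule F (Fin 4 → F)) : ProjPts F → ℤ :=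
  fun P => if P.1 ≤ Λ then 1 else 0

/-- The subgroup `N_Σ ⊆ ℤ^𝒫` generated by the vectors `2^{3−k}(v_Λ − v_{Λ'})`,
for `Λ, Λ'` running over `k`-dimensional subspaces of `F^4` and `k ∈ {1,2,3}`. -/
noncomputable def NSigma (F : Type) [Field F] : Submodule ℤ (ProjPts F → ℤ) :=
  Submodule.span ℤ {w | ∃ k : ℕ, 1 ≤ k ∧ k ≤ 3 ∧ ∃ Λ Λ' : Submodule F (Fin 4 → F),
    Module.finrank F ↥Λ = k ∧ Module.finrank F ↥Λ' = k ∧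
    w = (2 : ℤ) ^ (3 - k) • (vLam F Λ - vLam F Λ')}

/-- `M_𝒞 = N_Σ + 8·ℤ^𝒫`. -/
noncomputable def MCal (F : Type) [Field F] : Submodule ℤ (ProjPts F → ℤ) :=
  NSigma F ⊔ LinearMap.range ((8 : ℤ) • (LinearMap.id : (ProjPts F → ℤ) →ₗ[ℤ] (ProjPts F → ℤ)))

/-- The bilinear form `B(x,y) = (1/4)·Σ_P x_P y_P`. -/
noncomputable def BF (F : Type) [Field F] [Finite F] (x y : ProjPts F → ℤ) : ℚ :=
  (∑ P, (x P : ℚ) * y P) / 4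

/-- Coordinatewise reduction modulo 2, `ℤ^𝒫 → F_2^𝒫`. -/
noncomputable def redMod2 (F : Type) [Field F] : (ProjPts F → ℤ) →ₗ[ℤ] (ProjPts F → ZMod 2) where
  toFun x := fun P => (x P : ZMod 2)
  map_add' x y := funext fun P => by push_cast [Pi.add_apply]; ring
  map_smul' c x := funext fun P => by simp [Pi.smul_apply, zsmul_eq_mul]

/-- The Hamming weight of a word in `F_2^𝒫`: the number of nonzero coordinates. -/
noncomputable def wtF (F : Type) [Field F] (ω : ProjPts F → ZMod 2) : ℕ :=
  Nat.card {P : ProjPts F // ω P ≠ 0}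

open scoped Classical

section Aux
variable (F : Type) [Field F] [Fintype F]

lemma point_le_iff (P Q : ProjPts F) : Q.1 ≤ P.1 ↔ Q = P := by
  constructor
  · intro h
    exact Subtype.ext (Submodule.eq_of_le_of_finrank_eq h (Q.2.trans P.2.symm))
  · rintro rfl; exact le_rfl

lemma count_points (W : Submodule F (Fin 4 → F)) :
    Fintype.card {P : ProjPts F // P.1 ≤ W} * (Fintype.card F - 1)
      = Fintype.card F ^ Module.finrank F ↥W - 1 := by
  classical
  let g : {v : ↥W // v ≠ 0} → {P : ProjPts F // P.1 ≤ W} := fun v =>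
    ⟨⟨Submodule.span F {(v.1 : Fin 4 → F)},
      finrank_span_singleton (by simpa using v.2)⟩,
      (Submodule.span_singleton_le_iff_mem _ _).mpr v.1.2⟩
  have hfibEquiv : ∀ P : {P : ProjPts F // P.1 ≤ W},
      {v : {v : ↥W // v ≠ 0} // g v = P} ≃ {u : ↥(P.1.1) // u ≠ (0 : ↥(P.1.1))} := by
    intro P
    refine ⟨fun v => ⟨⟨(v.1.1 : Fin 4 → F), ?_⟩, ?_⟩,
      fun u => ⟨⟨⟨(u.1 : Fin 4 → F), P.2 u.1.2⟩, by simpa using u.2⟩, ?_⟩, ?_, ?_⟩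
    · have h := congrArg (fun Q => Q.1.1) v.2
      simp only [g] at h
      exact h ▸ Submodule.mem_span_singleton_self _
    · simpa using v.1.2
    · apply Subtype.ext; apply Subtype.ext
      exact Submodule.eq_of_le_of_finrank_eq
        ((Submodule.span_singleton_le_iff_mem _ _).mpr u.1.2)
        ((finrank_span_singleton (by simpa using u.2)).trans P.1.2.symm)
    · intro v; apply Subtype.ext; apply Subtype.ext; apply Subtype.ext; rfl
    · intro u; apply Subtype.ext; apply Subtype.ext; rfl
  have h1 : Fintype.card {v : ↥W // v ≠ 0}
      = Fintype.card {P : ProjPts F // P.1 ≤ W} * (Fintype.card F - 1) := by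
    rw [Fintype.card_congr (Equiv.sigmaFiberEquiv g).symm, Fintype.card_sigma]
    have : ∀ P : {P : ProjPts F // P.1 ≤ W},
        Fintype.card {v : {v : ↥W // v ≠ 0} // g v = P} = Fintype.card F - 1 := by
      intro P
      rw [Fintype.card_congr (hfibEquiv P)]
      have hc : Fintype.card ↥(P.1.1) = Fintype.card F := by
        rw [Module.card_eq_pow_finrank (K := F) (V := ↥(P.1.1)), P.1.2, pow_one]
      rw [Fintype.card_subtype_compl, Fintype.card_subtype_eq, hc]
    rw [Finset.sum_congr rfl (fun P _ => this P), Finset.sum_const, Finset.card_univ,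
      smul_eq_mul]
  have h2 : Fintype.card {v : ↥W // v ≠ 0} = Fintype.card ↥W - 1 := by
    rw [Fintype.card_subtype_compl, Fintype.card_subtype_eq]
  rw [← h1, h2, Module.card_eq_pow_finrank (K := F) (V := ↥W)]

lemma card_projpts (hF : Fintype.card F = 4) : Fintype.card (ProjPts F) = 85 := by
  have h := count_points F ⊤
  rw [Fintype.card_congr (Equiv.subtypeUnivEquiv (fun P => le_top))] at h
  rw [finrank_top, Module.finrank_pi, Fintype.card_fin, hF] at h
  omega

lemma count_eq_of_finrank_eq (hF : Fintype.card F = 4) (Λ Λ' : Submodule F (Fin 4 → F))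
    (h : Module.finrank F ↥Λ = Module.finrank F ↥Λ') :
    Fintype.card {P : ProjPts F // P.1 ≤ Λ} = Fintype.card {P : ProjPts F // P.1 ≤ Λ'} := by
  have h1 := count_points F Λ
  have h2 := count_points F Λ'
  rw [h, ← h2] at h1
  rw [hF] at h1
  omega

end Aux

section Aux2
variable (F : Type) [Field F] [Fintype F]

noncomputable def SZ : (ProjPts F → ℤ) →ₗ[ℤ] ℤ where
  toFun x := ∑ P, x P
  map_add' x y := by simp [Finset.sum_add_distrib]
  map_smul' c x := by simp [Finset.mul_sum]

lemma SZ_vLam (Λ : Submodule F (Fin 4 → F)) :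
    SZ F (vLam F Λ) = (Fintype.card {P : ProjPts F // P.1 ≤ Λ} : ℤ) := by
  classical
  simp only [SZ, vLam, LinearMap.coe_mk, AddHom.coe_mk]
  rw [Fintype.card_subtype, Finset.sum_boole]

lemma SZ_vLam_eq (hF : Fintype.card F = 4) (Λ Λ' : Submodule F (Fin 4 → F))
    (h : Module.finrank F ↥Λ = Module.finrank F ↥Λ') :
    SZ F (vLam F Λ) = SZ F (vLam F Λ') := by
  rw [SZ_vLam, SZ_vLam, count_eq_of_finrank_eq F hF Λ Λ' h]

lemma dvd_SZ_of_mem_MCal (hF : Fintype.card F = 4) {m : ProjPts F → ℤ}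
    (hm : m ∈ MCal F) : (8 : ℤ) ∣ SZ F m := by
  have hD : MCal F ≤ Submodule.comap (SZ F) (Ideal.span {(8 : ℤ)}) := by
    apply sup_le
    · rw [NSigma, Submodule.span_le]
      rintro w ⟨k, hk1, hk3, Λ, Λ', hΛ, hΛ', rfl⟩
      simp only [SetLike.mem_coe, Submodule.mem_comap, map_smul,
        map_sub, SZ_vLam_eq F hF Λ Λ' (hΛ.trans hΛ'.symm), sub_self, smul_zero]
      exact Submodule.zero_mem _
    · rintro w ⟨y, rfl⟩
      simp only [Submodule.mem_comap, LinearMap.smul_apply, LinearMap.id_coe, id_eq, map_smul,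
        smul_eq_mul, Ideal.mem_span_singleton]
      exact ⟨SZ F y, rfl⟩
  have := hD hm
  rw [Submodule.mem_comap, Ideal.mem_span_singleton] at this
  exact this

end Aux2

noncomputable def phiZ (F : Type) [Field F] [Fintype F] :
    (ProjPts F → ZMod 2) →ₗ[ZMod 2] ZMod 2 where
  toFun c := ∑ P, c P
  map_add' x y := by simp [Finset.sum_add_distrib]
  map_smul' c x := by simp [Finset.mul_sum]


/-- **Description of `Γ_2`** (proof of Theorem 6.1).  The binary code
`Γ_2 = {(x/4) mod 2 : x ∈ M_𝒞 ∩ 4ℤ^𝒫} ⊆ F_2^85` is exactly the even-weight code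
`{c : Σ_P c_P = 0}`; in particular it has `2^84` elements (dimension `84`). -/
theorem Gamma2_description (F : Type) [Field F] [Fintype F] (hF : Fintype.card F = 4) :
    (∀ c : ProjPts F → ZMod 2,
      c ∈ ((MCal F).comap
          ((4 : ℤ) • (LinearMap.id : (ProjPts F → ℤ) →ₗ[ℤ] (ProjPts F → ℤ)))).map
        (redMod2 F) ↔ ∑ P, c P = 0) ∧
    Nat.card ↥(((MCal F).comap
        ((4 : ℤ) • (LinearMap.id : (ProjPts F → ℤ) →ₗ[ℤ] (ProjPts F → ℤ)))).map
      (redMod2 F)) = 2 ^ 84 := by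
  classical
  have hne : Nonempty (ProjPts F) :=
    Fintype.card_pos_iff.mp (by rw [card_projpts F hF]; norm_num)
  obtain ⟨P₀⟩ := hne
  have hmem : ∀ c : ProjPts F → ZMod 2,
      c ∈ ((MCal F).comap
          ((4 : ℤ) • (LinearMap.id : (ProjPts F → ℤ) →ₗ[ℤ] (ProjPts F → ℤ)))).map
        (redMod2 F) ↔ ∑ P, c P = 0 := by
    intro c
    constructor
    · rintro ⟨x, hx, rfl⟩
      rw [SetLike.mem_coe, Submodule.mem_comap] at hx
      have h8 := dvd_SZ_of_mem_MCal F hF hx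
      have h4 : SZ F (((4 : ℤ) • (LinearMap.id : (ProjPts F → ℤ) →ₗ[ℤ] (ProjPts F → ℤ))) x)
          = 4 * SZ F x := by
        rw [LinearMap.smul_apply, LinearMap.id_coe, id_eq, map_smul, smul_eq_mul]
      rw [h4] at h8
      have h2 : (2 : ℤ) ∣ SZ F x := by
        rcases h8 with ⟨u, hu⟩
        exact ⟨u, by linarith⟩
      have : ((SZ F x : ℤ) : ZMod 2) = 0 := by
        rw [ZMod.intCast_zmod_eq_zero_iff_dvd]
        exact_mod_cast h2
      rw [← this]
      simp [SZ, redMod2]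
    · intro hc
      set x : ProjPts F → ℤ := fun P => if c P = 0 then 0 else 1 with hxdef
      have hone : ∀ a : ZMod 2, a ≠ 0 → a = 1 := by decide
      have hred : redMod2 F x = c := by
        funext P
        by_cases h : c P = 0 <;> simp [redMod2, x, h]
        exact (hone _ h).symm
      have hcast : ((SZ F x : ℤ) : ZMod 2) = 0 := by
        have : ((SZ F x : ℤ) : ZMod 2) = ∑ P, c P := by
          rw [← hred]; simp [SZ, redMod2]
        rw [this, hc]
      have h2 : (2 : ℤ) ∣ SZ F x := by
        have := (ZMod.intCast_zmod_eq_zero_iff_dvd (SZ F x) 2).mp hcast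
        exact_mod_cast this
      obtain ⟨t, ht⟩ := h2
      have hSZ : ∑ P, x P = 2 * t := by simpa [SZ] using ht
      refine ⟨x, ?_, hred⟩
      rw [SetLike.mem_coe, Submodule.mem_comap]
      have key : ((4 : ℤ) • (LinearMap.id : (ProjPts F → ℤ) →ₗ[ℤ] (ProjPts F → ℤ))) x
          = (∑ P, x P • ((4 : ℤ) • (vLam F P.1 - vLam F P₀.1)))
            + (8 : ℤ) • (t • vLam F P₀.1) := by
        funext Q
        simp only [LinearMap.smul_apply, LinearMap.id_coe, id_eq, Pi.add_apply, Pi.smul_apply,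
          Finset.sum_apply, Pi.sub_apply, smul_eq_mul, vLam, point_le_iff]
        have step : ∀ P : ProjPts F,
            x P * (4 * ((if Q = P then (1 : ℤ) else 0) - if Q = P₀ then 1 else 0))
            = (if Q = P then 4 * x P else 0) - (if Q = P₀ then 4 * x P else 0) := by
          intro P; split_ifs <;> ring
        rw [Finset.sum_congr rfl (fun P _ => step P), Finset.sum_sub_distrib,
          Finset.sum_ite_eq, if_pos (Finset.mem_univ Q)]
        by_cases hQ : Q = P₀
        · simp only [hQ, eq_self_iff_true, if_true, ← Finset.mul_sum, hSZ]
          ring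
        · simp only [if_neg hQ, Finset.sum_const_zero, mul_zero, sub_zero, add_zero]
      rw [key, MCal]
      refine Submodule.add_mem _ (Submodule.mem_sup_left (Submodule.sum_mem _ (fun P _ =>
        Submodule.smul_mem _ _ (Submodule.subset_span
          ⟨1, le_rfl, by norm_num, P.1, P₀.1, P.2, P₀.2, by norm_num⟩))))
        (Submodule.mem_sup_right ⟨t • vLam F P₀.1, by simp⟩)
  refine ⟨hmem, ?_⟩
  haveI : Fact (Nat.Prime 2) := ⟨Nat.prime_two⟩
  have hcongr : Nat.card ↥(((MCal F).comap
        ((4 : ℤ) • (LinearMap.id : (ProjPts F → ℤ) →ₗ[ℤ] (ProjPts F → ℤ)))).map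
      (redMod2 F)) = Nat.card ↥(LinearMap.ker (phiZ F)) := by
    refine Nat.card_congr (Equiv.subtypeEquivRight (fun c => ?_))
    rw [hmem c, LinearMap.mem_ker]
    rfl
  have hsurj : Function.Surjective (phiZ F) := by
    intro a
    exact ⟨fun Q => if Q = P₀ then a else 0, by simp [phiZ, Finset.sum_ite_eq']⟩
  have hrank : Module.finrank (ZMod 2) ↥(LinearMap.ker (phiZ F)) = 84 := by
    have h := LinearMap.finrank_range_add_finrank_ker (phiZ F)
    rw [LinearMap.range_eq_top.mpr hsurj, finrank_top, Module.finrank_self,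
      Module.finrank_pi, card_projpts F hF] at h
    omega
  rw [hcongr, Nat.card_eq_fintype_card,
    Module.card_eq_pow_finrank (K := ZMod 2) (V := ↥(LinearMap.ker (phiZ F))), hrank, ZMod.card]
end
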